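/- Suppose Cay(F_{q^m}, C_0^{(N,q^m)}) is a cyclotomic strongly regular graph in the subfield case with N = (q^m−1)/(q−1), so C_0^{(N,q^m)} = F_q*. Then the connection set E of the elliptic lifting construction equals {x ∈ F_{q^{2m}}* : Tr_{q^m/q}(x^{q^m+1}) = 0}, and x ↦ Tr_{q^m/q}(x^{q^m+1}) is a nondegenerate F_q-valued quadratic form of elliptic type on F_{q^{2m}} viewed as an F_q-vector space. -/

import Mathlib

open Finset Polynomial
open scoped Classical


-- affine fiber count
lemma aux_fiber (F M : Type) [Field F] [Fintype F] [AddCommGroup M] [Module F M] [Fintype M]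
    (f : M →ₗ[F] F) (hf : f ≠ 0) (a : F) :
    (univ.filter fun v => f v = a).card * Fintype.card F = Fintype.card M := by
  obtain ⟨v, hv⟩ : ∃ v, f v ≠ 0 := by
    by_contra h
    push_neg at h
    exact hf (by ext w; simp [h w])
  have key : ∀ b : F, (univ.filter fun v => f v = b).card
      = (univ.filter fun v => f v = a).card := by
    intro b
    apply Finset.card_bij' (fun x _ => x - (b / f v) • v + (a / f v) • v)
      (fun x _ => x - (a / f v) • v + (b / f v) • v)
    · intro x hx
      simp only [mem_filter, mem_univ, true_and] at hx ⊢
      simp [map_add, map_sub, map_smul, hx, div_mul_cancel₀, hv]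
    · intro x hx
      simp only [mem_filter, mem_univ, true_and] at hx ⊢
      simp [map_add, map_sub, map_smul, hx, div_mul_cancel₀, hv]
    · intro x _; abel
    · intro x _; abel
  have := Finset.card_eq_sum_card_fiberwise (f := f) (s := univ) (t := univ)
    (fun x _ => mem_univ _)
  rw [Finset.card_univ] at this
  rw [mul_comm, ← Finset.card_univ (α := F), this]
  rw [Finset.sum_congr rfl (fun b _ => key b)]
  simp [Finset.sum_const, Finset.card_univ, mul_comm]



lemma aux_pow_card_le (E : Type) [Field E] [Fintype E] (n : ℕ) (hn : 0 < n) (b : E) :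
    (univ.filter fun x : E => x ^ n = b).card ≤ n := by
  have hP : (X ^ n - C b : E[X]) ≠ 0 := by
    intro h
    have := congrArg natDegree h
    rw [natDegree_X_pow_sub_C, natDegree_zero] at this
    omega
  calc (univ.filter fun x : E => x ^ n = b).card
      ≤ (X ^ n - C b : E[X]).roots.toFinset.card := by
        apply Finset.card_le_card
        intro x hx
        simp only [mem_filter, mem_univ, true_and] at hx
        simp [Multiset.mem_toFinset, mem_roots, hP, sub_eq_zero, hx]
    _ ≤ Multiset.card (X ^ n - C b : E[X]).roots := Multiset.toFinset_card_le _
    _ ≤ (X ^ n - C b : E[X]).natDegree := card_roots' _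
    _ = n := natDegree_X_pow_sub_C

lemma aux_fixed_le (E : Type) [Field E] [Fintype E] (t : ℕ) (ht : 1 < t) :
    (univ.filter fun x : E => x ^ t = x).card ≤ t := by
  have hP : (X ^ t - X : E[X]) ≠ 0 := by
    intro h
    have h2 := congrArg natDegree h
    rw [natDegree_sub_eq_left_of_natDegree_lt, natDegree_X_pow, natDegree_zero] at h2
    · omega
    · simpa [natDegree_X_pow] using ht
  have hdeg : (X ^ t - X : E[X]).natDegree = t := by
    rw [natDegree_sub_eq_left_of_natDegree_lt, natDegree_X_pow]
    simpa [natDegree_X_pow] using ht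
  calc (univ.filter fun x : E => x ^ t = x).card
      ≤ (X ^ t - X : E[X]).roots.toFinset.card := by
        apply Finset.card_le_card
        intro x hx
        simp only [mem_filter, mem_univ, true_and] at hx
        simp [Multiset.mem_toFinset, mem_roots, hP, sub_eq_zero, hx]
    _ ≤ Multiset.card (X ^ t - X : E[X]).roots := Multiset.toFinset_card_le _
    _ ≤ (X ^ t - X : E[X]).natDegree := card_roots' _
    _ = t := hdeg

lemma aux_fixed (F K : Type) [Field F] [Fintype F] [Field K] [Fintype K] [Algebra F K]
    (t : ℕ) (ht : 1 < t) (hF : Fintype.card F = t) (z : K) (hz : z ^ t = z) :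
    ∃ c : F, algebraMap F K c = z := by
  classical
  set S := (univ.filter fun x : K => x ^ t = x) with hS
  have himg : (univ.image (algebraMap F K)) ⊆ S := by
    intro x hx
    simp only [mem_image] at hx
    obtain ⟨c, _, rfl⟩ := hx
    simp only [hS, mem_filter, mem_univ, true_and, ← map_pow]
    rw [← hF, FiniteField.pow_card]
  have hcard : (univ.image (algebraMap F K)).card = t := by
    rw [Finset.card_image_of_injective _ (algebraMap F K).injective, Finset.card_univ, hF]
  have heq : (univ.image (algebraMap F K)) = S :=
    Finset.eq_of_subset_of_card_le himg (by rw [hcard]; exact aux_fixed_le K t ht)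
  have hzS : z ∈ S := by simp [hS, hz]
  rw [← heq] at hzS
  simp only [mem_image] at hzS
  obtain ⟨c, _, hc⟩ := hzS
  exact ⟨c, hc⟩


lemma aux_finrank (F E : Type) [Field F] [Field E] [Fintype F] [Fintype E] [Algebra F E]
    (q a : ℕ) (hq : 1 < q) (hF : Fintype.card F = q) (hE : Fintype.card E = q ^ a) :
    Module.finrank F E = a := by
  have := Module.card_eq_pow_finrank (K := F) (V := E)
  rw [hF, hE] at this
  exact (Nat.pow_right_injective hq this.symm)

lemma aux_frob (K E : Type) [Field K] [Fintype K] [Field E] [Fintype E] [Algebra K E]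
    (Q : ℕ) (hQ : 1 < Q) (hK : Fintype.card K = Q) (hE : Fintype.card E = Q ^ 2) :
    ∃ φ : E ≃ₐ[K] E, (∀ x : E, φ x = x ^ Q) ∧
      (∀ x : E, algebraMap K E (Algebra.norm K x) = x ^ (Q + 1)) ∧
      (∀ x : E, algebraMap K E (Algebra.trace K E x) = x + x ^ Q) := by
  classical
  obtain ⟨p', hp'⟩ := CharP.exists K
  haveI := hp'
  haveI : CharP E p' := charP_of_injective_algebraMap (algebraMap K E).injective p'
  obtain ⟨n, hpprime, hcard⟩ := FiniteField.card K p'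
  haveI : Fact p'.Prime := ⟨hpprime⟩
  have hQp : Q = p' ^ (n : ℕ) := by rw [← hK, hcard]
  -- the ring hom x ↦ x ^ Q
  have hfr : ∀ x : E, iterateFrobenius E p' (n : ℕ) x = x ^ Q := by
    intro x; rw [iterateFrobenius_def, hQp]
  have hcomm : ∀ c : K, (iterateFrobenius E p' (n : ℕ)) (algebraMap K E c) = algebraMap K E c := by
    intro c
    rw [hfr, ← map_pow, ← hK, FiniteField.pow_card]
  let ψ : E →ₐ[K] E := { toRingHom := iterateFrobenius E p' (n : ℕ), commutes' := hcomm }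
  have hψ : ∀ x : E, ψ x = x ^ Q := hfr
  have hbij : Function.Bijective ψ := Finite.injective_iff_bijective.mp (ψ.toRingHom.injective)
  let φ : E ≃ₐ[K] E := AlgEquiv.ofBijective ψ hbij
  have hφ : ∀ x : E, φ x = x ^ Q := hψ
  -- finrank K E = 2
  have hrank : Module.finrank K E = 2 := aux_finrank K E Q 2 hQ hK hE
  have hcardaut : Fintype.card (E ≃ₐ[K] E) = 2 := by
    rw [← Nat.card_eq_fintype_card, IsGalois.card_aut_eq_finrank, hrank]
  -- φ ≠ 1
  have hφne : φ ≠ 1 := by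
    intro h
    have hall : ∀ x : E, x ^ Q = x := by
      intro x
      have := congrArg (fun ψ => ψ x) h
      simpa [hφ x] using this
    have hle := aux_fixed_le E Q hQ
    have : (univ.filter fun x : E => x ^ Q = x) = univ := by
      apply Finset.eq_univ_of_forall; intro x; simp [hall x]
    rw [this, Finset.card_univ, hE] at hle
    nlinarith
  have huniv : (univ : Finset (E ≃ₐ[K] E)) = {1, φ} := by
    symm
    apply Finset.eq_univ_of_card
    rw [Finset.card_insert_of_notMem (by simp [Ne.symm hφne]), Finset.card_singleton, hcardaut]
  constructor
  case h =>
    refine ⟨hφ, ?_, ?_⟩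
    · intro x
      rw [Algebra.norm_eq_prod_automorphisms, huniv]
      rw [Finset.prod_insert (by simp [Ne.symm hφne]), Finset.prod_singleton]
      rw [hφ x]
      simp [pow_succ, pow_add, mul_comm]
    · intro x
      rw [trace_eq_sum_automorphisms, huniv]
      rw [Finset.sum_insert (by simp [Ne.symm hφne]), Finset.sum_singleton]
      rw [hφ x]
      rfl



section
variable (E : Type) [Field E] [Fintype E]

lemma aux_orderOf (Q : ℕ) (hQ : 1 < Q) (hE : Fintype.card E = Q ^ 2)
    (γ : E) (hγ : ∀ x : E, x ≠ 0 → ∃ k : ℕ, x = γ ^ k) (hγ0 : γ ≠ 0) :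
    orderOf γ = Q ^ 2 - 1 := by
  obtain ⟨a, rfl⟩ : ∃ a, Q = a + 2 := ⟨Q - 2, by omega⟩
  have hsq : (a + 2) ^ 2 = a * a + 4 * a + 4 := by ring
  have hpow : γ ^ ((a + 2) ^ 2 - 1) = 1 := by
    rw [← hE]; exact FiniteField.pow_card_sub_one_eq_one γ hγ0
  have hdvd : orderOf γ ∣ (a + 2) ^ 2 - 1 := orderOf_dvd_of_pow_eq_one hpow
  have hfin : IsOfFinOrder γ := by
    rw [isOfFinOrder_iff_pow_eq_one]; exact ⟨(a + 2) ^ 2 - 1, by omega, hpow⟩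
  have hle : orderOf γ ≤ (a + 2) ^ 2 - 1 := Nat.le_of_dvd (by omega) hdvd
  have hge : (a + 2) ^ 2 - 1 ≤ orderOf γ := by
    have hsub : univ.erase (0 : E) ⊆ (Finset.range (orderOf γ)).image (fun j => γ ^ j) := by
      intro x hx
      rw [Finset.mem_erase] at hx
      obtain ⟨k, rfl⟩ := hγ x hx.1
      rw [Finset.mem_image]
      have hpos : 0 < orderOf γ := hfin.orderOf_pos
      exact ⟨k % orderOf γ, Finset.mem_range.mpr (Nat.mod_lt _ hpos), by rw [pow_mod_orderOf]⟩
    have h1 := Finset.card_le_card hsub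
    rw [Finset.card_erase_of_mem (mem_univ _), Finset.card_univ, hE] at h1
    calc (a + 2) ^ 2 - 1 ≤ ((Finset.range (orderOf γ)).image (fun j => γ ^ j)).card := h1
      _ ≤ (Finset.range (orderOf γ)).card := Finset.card_image_le
      _ = orderOf γ := Finset.card_range _
  omega

lemma aux_mu_card (Q : ℕ) (hQ : 1 < Q) (hE : Fintype.card E = Q ^ 2)
    (γ : E) (hγ : ∀ x : E, x ≠ 0 → ∃ k : ℕ, x = γ ^ k) (hγ0 : γ ≠ 0) :
    (univ.filter fun x : E => x ^ (Q + 1) = 1).card = Q + 1 := by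
  have horder := aux_orderOf E Q hQ hE γ hγ hγ0
  have hone : γ ^ (Q ^ 2 - 1) = 1 := by
    rw [← hE]; exact FiniteField.pow_card_sub_one_eq_one γ hγ0
  have harith : Q * (Q - 1) < Q ^ 2 - 1 ∧ (Q - 1) * (Q + 1) = Q ^ 2 - 1 := by
    obtain ⟨a, rfl⟩ : ∃ a, Q = a + 2 := ⟨Q - 2, by omega⟩
    rw [show a + 2 - 1 = a + 1 by omega,
      show (a + 2) ^ 2 - 1 = a * a + 4 * a + 3 by
        have : (a + 2) ^ 2 = a * a + 4 * a + 4 := by ring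
        omega]
    constructor
    · nlinarith
    · ring
  have key : ∀ k l : ℕ, k < l → l ≤ Q → γ ^ (k * (Q - 1)) ≠ γ ^ (l * (Q - 1)) := by
    intro k l hkl hlQ heq
    have h1 : γ ^ (l * (Q - 1)) = γ ^ (k * (Q - 1)) * γ ^ ((l - k) * (Q - 1)) := by
      rw [← pow_add, ← Nat.add_mul]; congr 2; omega
    have h2 : γ ^ (k * (Q - 1)) * γ ^ ((l - k) * (Q - 1)) = γ ^ (k * (Q - 1)) * 1 := by
      rw [mul_one, ← h1, heq]
    have h3 : γ ^ ((l - k) * (Q - 1)) = 1 := mul_left_cancel₀ (pow_ne_zero _ hγ0) h2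
    have h4 : Q ^ 2 - 1 ≤ (l - k) * (Q - 1) := by
      rw [← horder]
      exact Nat.le_of_dvd (Nat.mul_pos (by omega) (by omega)) (orderOf_dvd_of_pow_eq_one h3)
    have h5 : (l - k) * (Q - 1) ≤ Q * (Q - 1) := Nat.mul_le_mul_right _ (by omega)
    omega
  have hge : Q + 1 ≤ (univ.filter fun x : E => x ^ (Q + 1) = 1).card := by
    have hmaps : ∀ j ∈ Finset.range (Q + 1),
        γ ^ (j * (Q - 1)) ∈ (univ.filter fun x : E => x ^ (Q + 1) = 1) := by
      intro j _
      simp only [mem_filter, mem_univ, true_and]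
      rw [← pow_mul, show j * (Q - 1) * (Q + 1) = ((Q - 1) * (Q + 1)) * j from by ring,
        harith.2, pow_mul, hone, one_pow]
    have hinj : Set.InjOn (fun j => γ ^ (j * (Q - 1))) (Finset.range (Q + 1)) := by
      intro k hk l hl hkl
      simp only [Finset.coe_range, Set.mem_Iio] at hk hl
      rcases lt_trichotomy k l with h | h | h
      · exact absurd hkl (key _ _ h (by omega))
      · exact h
      · exact absurd hkl.symm (key _ _ h (by omega))
    have := Finset.card_le_card_of_injOn _ hmaps hinj
    simpa using this
  have hle := aux_pow_card_le E (Q + 1) (by omega) (1 : E)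
  omega

lemma aux_pow_fiber (Q : ℕ) (hQ : 1 < Q) (hE : Fintype.card E = Q ^ 2)
    (γ : E) (hγ : ∀ x : E, x ≠ 0 → ∃ k : ℕ, x = γ ^ k) (hγ0 : γ ≠ 0)
    (b : E) (hb : b ≠ 0) (hb1 : b ^ (Q - 1) = 1) :
    (univ.filter fun x : E => x ^ (Q + 1) = b).card = Q + 1 := by
  have horder := aux_orderOf E Q hQ hE γ hγ hγ0
  have hfact : (Q + 1) * (Q - 1) = Q ^ 2 - 1 := by
    obtain ⟨a, rfl⟩ : ∃ a, Q = a + 2 := ⟨Q - 2, by omega⟩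
    rw [show a + 2 - 1 = a + 1 by omega,
      show (a + 2) ^ 2 - 1 = a * a + 4 * a + 3 by
        have : (a + 2) ^ 2 = a * a + 4 * a + 4 := by ring
        omega]
    ring
  obtain ⟨l, rfl⟩ := hγ b hb
  have hdvd : Q ^ 2 - 1 ∣ l * (Q - 1) := by
    rw [← horder]
    apply orderOf_dvd_of_pow_eq_one
    rw [pow_mul]; exact hb1
  have hdvd2 : Q + 1 ∣ l := by
    have h1 : (Q + 1) * (Q - 1) ∣ l * (Q - 1) := by rw [hfact]; exact hdvd
    exact (Nat.mul_dvd_mul_iff_right (by omega : 0 < Q - 1)).mp h1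
  obtain ⟨l', rfl⟩ := hdvd2
  have hx₀s : (γ ^ l') ^ (Q + 1) = γ ^ ((Q + 1) * l') := by rw [← pow_mul, mul_comm]
  have hx₀0 : (γ ^ l' : E) ≠ 0 := pow_ne_zero _ hγ0
  have hmu := aux_mu_card E Q hQ hE γ hγ hγ0
  have hbij : (univ.filter fun x : E => x ^ (Q + 1) = γ ^ ((Q + 1) * l')).card
      = (univ.filter fun x : E => x ^ (Q + 1) = 1).card := by
    apply Finset.card_bij' (fun x _ => x * (γ ^ l')⁻¹) (fun u _ => u * γ ^ l')
    · intro x hx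
      simp only [mem_filter, mem_univ, true_and] at hx ⊢
      rw [mul_pow, hx, inv_pow, hx₀s, mul_inv_cancel₀ (by rw [← hx₀s]; exact pow_ne_zero _ hx₀0)]
    · intro u hu
      simp only [mem_filter, mem_univ, true_and] at hu ⊢
      rw [mul_pow, hu, one_mul, hx₀s]
    · intro x _
      field_simp
    · intro u _
      field_simp
  rw [hbij, hmu]
end



lemma aux_count (F V : Type) [Field F] [Fintype F] [AddCommGroup V] [Module F V] [Fintype V]
    (Φ : QuadraticForm F V) (W P : Submodule F V)
    (hWsing : ∀ x ∈ W, Φ x = 0)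
    (hP : ∀ x : V, x ∈ P ↔ ∀ w ∈ W, QuadraticMap.polar ⇑Φ x w = 0) :
    ∃ S₁ SP : ℕ, 1 ≤ S₁ ∧ S₁ ≤ SP ∧ SP * Fintype.card W = Fintype.card P ∧
      ((univ.filter fun x : V => Φ x = 0).card * Fintype.card F + SP * Fintype.card W
        = S₁ * (Fintype.card W * Fintype.card F) + Fintype.card (V ⧸ W) * Fintype.card W) ∧
      ((∀ x : V, x ∈ P → Φ x = 0 → x ∈ W) → S₁ ≤ 1) := by
  classical
  set q := Fintype.card F with hq
  set cW := Fintype.card W with hcW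
  have hWP : W ≤ P := by
    intro w' hw'
    rw [hP]
    intro w hw
    simp only [QuadraticMap.polar]
    rw [hWsing _ (W.add_mem hw' hw), hWsing _ hw', hWsing _ hw]
    ring
  have hΦadd : ∀ x w : V, Φ (x + w) = Φ x + Φ w + QuadraticMap.polar ⇑Φ x w := by
    intro x w
    simp only [QuadraticMap.polar]
    ring
  have F1 : ∀ c : V ⧸ W, (univ.filter fun x : V => Submodule.Quotient.mk x = c).card = cW := by
    intro c
    obtain ⟨x₀, rfl⟩ := Submodule.Quotient.mk_surjective W c
    rw [hcW, ← Finset.card_univ]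
    refine Finset.card_bij' (fun x hx => (⟨x - x₀, by
        simp only [mem_filter, mem_univ, true_and] at hx
        exact (Submodule.Quotient.eq W).mp hx⟩ : W))
      (fun w _ => x₀ + (w : V)) ?hi ?hj ?li ?ri
    case hi => intro x hx; exact mem_univ _
    case hj =>
      intro w _
      simp only [mem_filter, mem_univ, true_and]
      rw [Submodule.Quotient.mk_add, (Submodule.Quotient.mk_eq_zero W).mpr w.2, add_zero]
    case li => intro x _; simp
    case ri => intro w _; simp
  set S1fin := univ.filter (fun c : V ⧸ W =>
    ∃ x : V, Submodule.Quotient.mk x = c ∧ x ∈ P ∧ Φ x = 0) with hS1fin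
  set SPfin := univ.filter (fun c : V ⧸ W =>
    ∃ x : V, Submodule.Quotient.mk x = c ∧ x ∈ P) with hSPfin
  have hsub : S1fin ⊆ SPfin := by
    intro c hc
    simp only [hS1fin, hSPfin, mem_filter, mem_univ, true_and] at hc ⊢
    obtain ⟨x, h1, h2, _⟩ := hc
    exact ⟨x, h1, h2⟩
  refine ⟨S1fin.card, SPfin.card, ?_, Finset.card_le_card hsub, ?_, ?_, ?_⟩
  · have h0 : (0 : V ⧸ W) ∈ S1fin := by
      simp only [hS1fin, mem_filter, mem_univ, true_and]
      exact ⟨0, by simp, P.zero_mem, QuadraticMap.map_zero Φ⟩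
    exact Finset.card_pos.mpr ⟨0, h0⟩
  · -- SP * cW = card P
    have hcardP : Fintype.card P = (univ.filter fun x : V => x ∈ P).card := by
      rw [← Fintype.card_subtype]
    rw [hcardP]
    rw [Finset.card_eq_sum_card_fiberwise (f := fun x : V => Submodule.Quotient.mk x)
      (t := SPfin) (fun x hx => by
        simp only [mem_coe, mem_filter, mem_univ, true_and] at hx
        simp only [hSPfin, mem_coe, mem_filter, mem_univ, true_and]
        exact ⟨x, rfl, hx⟩)]
    have hper : ∀ c ∈ SPfin,
        ((univ.filter fun x : V => x ∈ P).filter (fun x => Submodule.Quotient.mk x = c)).card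
          = cW := by
      intro c hc
      simp only [hSPfin, mem_filter, mem_univ, true_and] at hc
      obtain ⟨x₀, rfl, hx₀P⟩ := hc
      rw [← F1 (Submodule.Quotient.mk x₀)]
      congr 1
      ext x
      simp only [mem_filter, mem_univ, true_and]
      constructor
      · exact fun h => h.2
      · intro hx
        refine ⟨?_, hx⟩
        have hxW : x - x₀ ∈ W := (Submodule.Quotient.eq W).mp hx
        have hxx : x = x₀ + (x - x₀) := by abel
        rw [hxx]
        exact P.add_mem hx₀P (hWP hxW)
    rw [Finset.sum_congr rfl hper, Finset.sum_const, smul_eq_mul, mul_comm]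
  · -- main equation
    have hZ : (univ.filter fun x : V => Φ x = 0).card
        = ∑ c : V ⧸ W, (univ.filter fun x : V =>
            Submodule.Quotient.mk x = c ∧ Φ x = 0).card := by
      rw [Finset.card_eq_sum_card_fiberwise (f := fun x : V => (Submodule.Quotient.mk x : V ⧸ W))
        (t := univ) (fun x _ => mem_univ _)]
      apply Finset.sum_congr rfl
      intro c _
      congr 1
      ext x
      simp only [mem_filter, mem_univ, true_and]
      tauto
    have hclass : ∀ c : V ⧸ W,
        (univ.filter fun x : V => Submodule.Quotient.mk x = c ∧ Φ x = 0).card * q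
        = if c ∈ S1fin then cW * q else if c ∈ SPfin then 0 else cW := by
      intro c
      by_cases h1 : c ∈ S1fin
      · rw [if_pos h1]
        simp only [hS1fin, mem_filter, mem_univ, true_and] at h1
        obtain ⟨x₀, rfl, hx₀P, hx₀Φ⟩ := h1
        congr 1
        rw [← F1 (Submodule.Quotient.mk x₀)]
        congr 1
        ext x
        simp only [mem_filter, mem_univ, true_and, and_iff_left_iff_imp]
        intro hx
        have hxW : x - x₀ ∈ W := (Submodule.Quotient.eq W).mp hx
        have hx' : x = x₀ + (x - x₀) := by abel
        rw [hx', hΦadd, hx₀Φ, hWsing _ hxW, (hP x₀).mp hx₀P _ hxW]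
        ring
      · rw [if_neg h1]
        by_cases h2 : c ∈ SPfin
        · rw [if_pos h2]
          simp only [hSPfin, mem_filter, mem_univ, true_and] at h2
          obtain ⟨x₀, rfl, hx₀P⟩ := h2
          convert zero_mul q
          rw [Finset.card_eq_zero, Finset.eq_empty_iff_forall_notMem]
          intro x hx
          simp only [mem_filter, mem_univ, true_and] at hx
          apply h1
          simp only [hS1fin, mem_filter, mem_univ, true_and]
          have hxW : x - x₀ ∈ W := (Submodule.Quotient.eq W).mp hx.1
          refine ⟨x, hx.1, ?_, hx.2⟩
          have hxx : x = x₀ + (x - x₀) := by abel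
          rw [hxx]
          exact P.add_mem hx₀P (hWP hxW)
        · rw [if_neg h2]
          obtain ⟨x₀, rfl⟩ := Submodule.Quotient.mk_surjective W c
          have hx₀P : x₀ ∉ P := by
            intro h
            apply h2
            simp only [hSPfin, mem_filter, mem_univ, true_and]
            exact ⟨x₀, rfl, h⟩
          obtain ⟨w₀, hw₀W, hw₀⟩ : ∃ w ∈ W, QuadraticMap.polar ⇑Φ x₀ w ≠ 0 := by
            by_contra h
            push_neg at h
            exact hx₀P ((hP x₀).mpr h)
          set ℓ : W →ₗ[F] F := (Φ.polarBilin x₀).domRestrict W with hℓ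
          have hℓne : ℓ ≠ 0 := by
            intro h
            apply hw₀
            have := congrArg (fun g => g (⟨w₀, hw₀W⟩ : W)) h
            simpa [hℓ] using this
          have hfib := aux_fiber F W ℓ hℓne (-Φ x₀)
          rw [← hcW] at hfib
          rw [← hfib, ← hq]
          congr 1
          refine Finset.card_bij' (fun x hx => (⟨x - x₀, by
              simp only [mem_filter, mem_univ, true_and] at hx
              exact (Submodule.Quotient.eq W).mp hx.1⟩ : W))
            (fun w _ => x₀ + (w : V)) ?hi ?hj ?li ?ri
          case hi =>
            intro x hx
            simp only [mem_filter, mem_univ, true_and] at hx ⊢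
            have hxW : x - x₀ ∈ W := (Submodule.Quotient.eq W).mp hx.1
            have hx' : x = x₀ + (x - x₀) := by abel
            rw [hx', hΦadd, hWsing _ hxW] at hx
            simp only [hℓ, LinearMap.domRestrict_apply, QuadraticMap.polarBilin_apply_apply]
            linear_combination hx.2
          case hj =>
            intro w hw
            simp only [mem_filter, mem_univ, true_and] at hw ⊢
            refine ⟨?_, ?_⟩
            · rw [Submodule.Quotient.mk_add, (Submodule.Quotient.mk_eq_zero W).mpr w.2, add_zero]
            · have hw' : QuadraticMap.polar ⇑Φ x₀ ↑w = -Φ x₀ := by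
                simpa [hℓ, LinearMap.domRestrict_apply] using hw
              rw [hΦadd, hWsing _ w.2, hw']
              ring
          case li => intro x _; simp
          case ri => intro w _; simp
    have hsum : (univ.filter fun x : V => Φ x = 0).card * q
        = ∑ c : V ⧸ W, (if c ∈ S1fin then cW * q else if c ∈ SPfin then 0 else cW) := by
      rw [hZ, Finset.sum_mul]
      exact Finset.sum_congr rfl (fun c _ => hclass c)
    have hfiltmem : univ.filter (· ∈ SPfin) = SPfin := Finset.filter_univ_mem _
    have hsplit : ∑ c : V ⧸ W, (if c ∈ S1fin then cW * q else if c ∈ SPfin then 0 else cW)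
        = S1fin.card * (cW * q) + (univ.filter (· ∉ SPfin)).card * cW := by
      rw [← Finset.sum_filter_add_sum_filter_not univ (· ∈ SPfin)]
      congr 1
      · rw [hfiltmem]
        rw [← Finset.sum_filter_add_sum_filter_not SPfin (· ∈ S1fin)]
        have he1 : SPfin.filter (· ∈ S1fin) = S1fin := by
          ext c
          simp only [mem_filter]
          exact ⟨fun h => h.2, fun h => ⟨hsub h, h⟩⟩
        rw [he1]
        have he2 : ∑ c ∈ S1fin, (if c ∈ S1fin then cW * q else if c ∈ SPfin then 0 else cW)
            = S1fin.card * (cW * q) := by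
          rw [Finset.sum_congr rfl (fun c hc => if_pos hc), Finset.sum_const, smul_eq_mul]
        have he3 : ∑ c ∈ SPfin.filter (· ∉ S1fin),
            (if c ∈ S1fin then cW * q else if c ∈ SPfin then 0 else cW) = 0 := by
          apply Finset.sum_eq_zero
          intro c hc
          rw [mem_filter] at hc
          rw [if_neg hc.2, if_pos hc.1]
        rw [he2, he3, add_zero]
      · have hce : ∀ c ∈ univ.filter (· ∉ SPfin),
            (if c ∈ S1fin then cW * q else if c ∈ SPfin then 0 else cW) = cW := by
          intro c hc
          rw [mem_filter] at hc
          rw [if_neg (fun h => hc.2 (hsub h)), if_neg hc.2]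
        rw [Finset.sum_congr rfl hce, Finset.sum_const, smul_eq_mul]
    have hcards : SPfin.card + (univ.filter (· ∉ SPfin)).card = Fintype.card (V ⧸ W) := by
      have h := Finset.card_filter_add_card_filter_not (s := (univ : Finset (V ⧸ W)))
        (p := (· ∈ SPfin))
      rw [hfiltmem, Finset.card_univ] at h
      convert h using 3
    have hmul : (SPfin.card + (univ.filter (· ∉ SPfin)).card) * cW
        = SPfin.card * cW + (univ.filter (· ∉ SPfin)).card * cW := Nat.add_mul _ _ _
    rw [hcards] at hmul
    rw [hsum, hsplit]
    omega
  · intro h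
    apply Finset.card_le_one.mpr
    intro a ha b hb
    simp only [hS1fin, mem_filter, mem_univ, true_and] at ha hb
    obtain ⟨x, rfl, hxP, hxΦ⟩ := ha
    obtain ⟨y, rfl, hyP, hyΦ⟩ := hb
    rw [(Submodule.Quotient.mk_eq_zero W).mpr (h x hxP hxΦ),
      (Submodule.Quotient.mk_eq_zero W).mpr (h y hyP hyΦ)]



-- surjectivity of x ↦ B x restricted to W, and kernel dimension
lemma aux_perp (F V : Type) [Field F] [Fintype F] [AddCommGroup V] [Module F V] [Fintype V]
    [FiniteDimensional F V]
    (B : LinearMap.BilinForm F V) (hB : B.Nondegenerate) (W : Submodule F V) :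
    Module.finrank F (LinearMap.ker (B.compl₂ W.subtype))
      + Module.finrank F W = Module.finrank F V := by
  have hsurj : Function.Surjective (B.compl₂ W.subtype) := by
    intro g
    obtain ⟨g', hg'⟩ := g.exists_extend
    refine ⟨(LinearMap.BilinForm.toDual B hB).symm g', ?_⟩
    ext w
    rw [LinearMap.compl₂_apply]
    have h1 : B ((LinearMap.BilinForm.toDual B hB).symm g') (W.subtype w)
        = (LinearMap.BilinForm.toDual B hB) ((LinearMap.BilinForm.toDual B hB).symm g')
          (W.subtype w) := (LinearMap.BilinForm.toDual_def hB).symm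
    rw [h1, (LinearMap.BilinForm.toDual B hB).apply_symm_apply, ← hg']
    rfl
  have hrn := LinearMap.finrank_range_add_finrank_ker (B.compl₂ W.subtype)
  rw [LinearMap.range_eq_top.mpr hsurj, finrank_top] at hrn
  have hdual : Module.finrank F (W →ₗ[F] F) = Module.finrank F W :=
    Subspace.dual_finrank_eq
  omega

/-- The subfield case of the elliptic lifting construction.  Let `F = F_q ≤ K = F_{q^m}
≤ E = F_{q^{2m}}`, `N = (q^m−1)/(q−1)`, `γ` a primitive element of `E` and
`ω = N_{E/K}(γ)` (so that `algebraMap K E ω = γ^{q^m+1}`, and generally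
`algebraMap K E (N_{E/K} x) = x^{q^m+1}`).  The subdifference set is the Singer
difference set `I = {i : Tr_{K/F}(ω^i) = 0}`, and the connection set
`E' = ∪_{i∈I} γ^i⟨γ^N⟩` equals `{x ∈ E* : Tr_{q^m/q}(x^{q^m+1}) = 0}`.  Moreover
`x ↦ Tr_{q^m/q}(x^{q^m+1})` is a nondegenerate `F_q`-valued quadratic form of elliptic
type on `E` (as a `2m`-dimensional `F_q`-vector space): every totally singular
`F`-subspace has dimension at most `m − 1`, and dimension `m − 1` is attained. -/
theorem subfield_case_elliptic_form (p : ℕ) [Fact p.Prime]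
    (q m : ℕ) (hq1 : 1 < q) (hm : 0 < m)
    (F : Type) [Field F] [Fintype F]
    (K : Type) [Field K] [Fintype K] [Algebra F K]
    (E : Type) [Field E] [Fintype E] [Algebra F E] [Algebra K E] [IsScalarTower F K E]
    (hF : Fintype.card F = q) (hK : Fintype.card K = q ^ m)
    (hE : Fintype.card E = q ^ (2 * m))
    (N : ℕ) (hN : N = (q ^ m - 1) / (q - 1))
    (γ : E) (hγ : ∀ x : E, x ≠ 0 → ∃ k : ℕ, x = γ ^ k)
    (ω : K) (hω : ω = Algebra.norm K γ) :
    (∀ x : E, algebraMap K E (Algebra.norm K x) = x ^ (q ^ m + 1)) ∧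
    ({x : E | ∃ i : ℕ, Algebra.trace F K (ω ^ i) = 0 ∧ ∃ k : ℕ, x = γ ^ (i + N * k)} =
      {x : E | x ≠ 0 ∧ Algebra.trace F K (Algebra.norm K x) = 0}) ∧
    (∃ Φ : QuadraticForm F E,
      (∀ x : E, Φ x = Algebra.trace F K (Algebra.norm K x)) ∧
      (∀ x : E, (∀ y : E, QuadraticMap.polar (⇑Φ) x y = 0) → Φ x = 0 → x = 0) ∧
      (∀ W : Submodule F E, (∀ x ∈ W, Φ x = 0) → Module.finrank F W ≤ m - 1) ∧
      (∃ W : Submodule F E, (∀ x ∈ W, Φ x = 0) ∧ Module.finrank F W = m - 1)) := by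
  have hQ1 : 1 < q ^ m := Nat.one_lt_pow (by omega) hq1
  have hEQ : Fintype.card E = (q ^ m) ^ 2 := by
    rw [hE, ← pow_mul, mul_comm]
  obtain ⟨φ, hφ, hnorm, htr⟩ := aux_frob K E (q ^ m) hQ1 hK hEQ
  -- γ ≠ 0
  have hγ0 : γ ≠ 0 := by
    intro h
    have hsub : (univ : Finset E) ⊆ {0, 1} := by
      intro x _
      rcases eq_or_ne x 0 with hx | hx
      · simp [hx]
      · obtain ⟨k, rfl⟩ := hγ x hx
        rcases Nat.eq_zero_or_pos k with hk | hk
        · simp [hk]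
        · rw [h, zero_pow (by omega)] at hx
          simp at hx
    have hcard := Finset.card_le_card hsub
    rw [Finset.card_univ, hE] at hcard
    have : 4 ≤ q ^ (2 * m) := by
      calc 4 = 2 ^ 2 := by norm_num
        _ ≤ q ^ 2 := Nat.pow_le_pow_left hq1 2
        _ ≤ q ^ (2 * m) := Nat.pow_le_pow_right (by omega) (by omega)
    have h2 : ({0, 1} : Finset E).card ≤ 2 := Finset.card_insert_le _ _ |>.trans (by simp)
    omega
  have hω0 : ω ≠ 0 := by
    rw [hω]
    intro h
    exact hγ0 (Algebra.norm_eq_zero_iff.mp h)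
  have hNd : N * (q - 1) = q ^ m - 1 := by
    rw [hN]
    apply Nat.div_mul_cancel
    simpa using Nat.sub_dvd_pow_sub_pow q 1 m
  have hωN : ∃ c : F, algebraMap F K c = ω ^ N := by
    apply aux_fixed F K q hq1 hF
    rw [← pow_mul]
    have hNq : N * q = N + N * (q - 1) := by
      have h' : N * q = N * (q - 1 + 1) := by congr 1; omega
      rw [h', Nat.mul_add, mul_one]; ring
    have h1 : ω ^ (q ^ m - 1) = 1 := by
      rw [← hK]; exact FiniteField.pow_card_sub_one_eq_one ω hω0
    rw [hNq, pow_add, hNd, h1, mul_one]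
  obtain ⟨c, hc⟩ := hωN
  have hc0 : c ≠ 0 := by
    intro h
    rw [h, map_zero] at hc
    exact pow_ne_zero N hω0 hc.symm
  have hnormγ : ∀ j : ℕ, Algebra.norm K (γ ^ j) = ω ^ j := by
    intro j
    rw [hω, map_pow]
  refine ⟨hnorm, ?_, ?_⟩
  · -- Part 2 : set equality
    ext x
    simp only [Set.mem_setOf_eq]
    constructor
    · rintro ⟨i, hi, k, rfl⟩
      refine ⟨pow_ne_zero _ hγ0, ?_⟩
      rw [hnormγ, pow_add, pow_mul, ← hc, ← map_pow, mul_comm, ← Algebra.smul_def, map_smul,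
        smul_eq_mul, hi, mul_zero]
    · rintro ⟨hx0, hx⟩
      obtain ⟨j, rfl⟩ := hγ x hx0
      refine ⟨j % N, ?_, j / N, by rw [Nat.mod_add_div]⟩
      rw [hnormγ] at hx
      have hj : j = j % N + N * (j / N) := (Nat.mod_add_div j N).symm
      rw [hj, pow_add, pow_mul, ← hc, ← map_pow, mul_comm, ← Algebra.smul_def, map_smul,
        smul_eq_mul] at hx
      rcases mul_eq_zero.mp hx with h | h
      · exact absurd h (pow_ne_zero _ hc0)
      · exact h
  · -- Part 3 : the quadratic form
    have hrankKE : Module.finrank K E = 2 := aux_finrank K E (q ^ m) 2 hQ1 hK hEQ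
    have hfr2m : Module.finrank F E = 2 * m := aux_finrank F E q (2 * m) hq1 hF hE
    -- the companion bilinear form
    set σL : E →ₗ[F] E := (φ.toLinearMap.restrictScalars F) with hσL
    have hσLapp : ∀ y : E, σL y = y ^ q ^ m := hφ
    set Bbil : E →ₗ[F] E →ₗ[F] F := (Algebra.traceForm F E).compl₂ σL with hBbdef
    have hBb : ∀ x y : E, Bbil x y = Algebra.trace F E (x * y ^ q ^ m) := by
      intro x y
      simp only [hBbdef, LinearMap.compl₂_apply, Algebra.traceForm_apply]
      rw [hσLapp]
    -- key identity at the level of K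
    have hkey : ∀ x y : E, Algebra.norm K (x + y)
        = Algebra.norm K x + Algebra.norm K y + Algebra.trace K E (x * y ^ q ^ m) := by
      intro x y
      apply (algebraMap K E).injective
      rw [hnorm, map_add, map_add, hnorm, hnorm, htr]
      have hadd : (x + y) ^ q ^ m = x ^ q ^ m + y ^ q ^ m := by
        rw [← hφ, ← hφ, ← hφ, map_add]
      have hyQQ : (x * y ^ q ^ m) ^ q ^ m = x ^ q ^ m * y := by
        rw [mul_pow, ← pow_mul]
        congr 1
        calc y ^ (q ^ m * q ^ m) = y ^ Fintype.card E := by rw [hEQ, pow_two]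
          _ = y := FiniteField.pow_card y
      rw [hyQQ, pow_succ, pow_succ, pow_succ, hadd]
      ring
    -- the companion property
    have hcomp : ∀ x y : E, Algebra.trace F K (Algebra.norm K (x + y))
        = Algebra.trace F K (Algebra.norm K x) + Algebra.trace F K (Algebra.norm K y)
          + Bbil x y := by
      intro x y
      rw [hkey, map_add, map_add, hBb, Algebra.trace_trace]
    -- scaling
    have htsmul : ∀ (a : F) (x : E), Algebra.trace F K (Algebra.norm K (a • x))
        = a * a * Algebra.trace F K (Algebra.norm K x) := by
      intro a x
      have h1 : a • x = algebraMap K E (algebraMap F K a) * x := by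
        rw [← IsScalarTower.algebraMap_apply, Algebra.smul_def]
      rw [h1, map_mul, Algebra.norm_algebraMap, hrankKE]
      have h2 : algebraMap F K a ^ 2 * Algebra.norm K x
          = (a * a) • Algebra.norm K x := by
        rw [Algebra.smul_def, map_mul, pow_two]
      rw [h2, map_smul, smul_eq_mul]
    set Φ : QuadraticForm F E :=
      { toFun := fun x => Algebra.trace F K (Algebra.norm K x),
        toFun_smul := htsmul,
        exists_companion' := ⟨Bbil, hcomp⟩ } with hΦdef
    have hΦ : ∀ x : E, Φ x = Algebra.trace F K (Algebra.norm K x) := fun _ => rfl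
    have hpolar : ∀ x y : E, QuadraticMap.polar (⇑Φ) x y = Bbil x y := by
      intro x y
      simp only [QuadraticMap.polar, hΦ]
      rw [hcomp]
      ring
    -- nondegeneracy of the polar form
    have hBnd : LinearMap.BilinForm.Nondegenerate Bbil := by
      refine LinearMap.BilinForm.Nondegenerate.ofSeparatingLeft ?_
      intro x hx
      apply (traceForm_nondegenerate F E).1 x
      intro z
      have h1 := hx (φ.symm z)
      rw [hBb, ← hφ (φ.symm z), AlgEquiv.apply_symm_apply] at h1
      rw [Algebra.traceForm_apply]
      exact h1
    -- global count of singular vectors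
    set Tfin := univ.filter (fun c : K => c ≠ 0 ∧ Algebra.trace F K c = 0) with hTfin
    have hTq : (Tfin.card + 1) * q = q ^ m := by
      have h1 := aux_fiber F K (Algebra.trace F K) (Algebra.trace_ne_zero F K) 0
      rw [hF, hK] at h1
      have h2 : univ.filter (fun c : K => Algebra.trace F K c = 0) = insert 0 Tfin := by
        ext d
        simp only [hTfin, mem_filter, mem_univ, true_and, Finset.mem_insert]
        rcases eq_or_ne d 0 with hd | hd
        · simp [hd]
        · simp [hd]
      have h3 : (0 : K) ∉ Tfin := by simp [hTfin]
      rw [h2, Finset.card_insert_of_notMem h3] at h1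
      exact h1
    have hZcard : (univ.filter fun x : E => Φ x = 0).card
        = Tfin.card * (q ^ m + 1) + 1 := by
      set Z' := univ.filter (fun x : E => x ≠ 0 ∧ Φ x = 0) with hZ'
      have h0 : univ.filter (fun x : E => Φ x = 0) = insert 0 Z' := by
        ext x
        simp only [hZ', mem_filter, mem_univ, true_and, Finset.mem_insert]
        rcases eq_or_ne x 0 with hx | hx
        · simp [hx, QuadraticMap.map_zero]
        · simp [hx]
      have h0' : (0 : E) ∉ Z' := by simp [hZ']
      rw [h0, Finset.card_insert_of_notMem h0']
      congr 1
      -- count Z' by fibers of the norm map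
      rw [Finset.card_eq_sum_card_fiberwise (f := fun x : E => Algebra.norm K x)
        (t := Tfin) (fun x hx => by
          simp only [hZ', mem_coe, mem_filter, mem_univ, true_and] at hx
          simp only [hTfin, mem_coe, mem_filter, mem_univ, true_and]
          exact ⟨Algebra.norm_ne_zero_iff.mpr hx.1, by rw [← hΦ]; exact hx.2⟩)]
      have hper : ∀ d ∈ Tfin, (Z'.filter (fun x : E => Algebra.norm K x = d)).card
          = q ^ m + 1 := by
        intro d hd
        simp only [hTfin, mem_filter, mem_univ, true_and] at hd
        have hd0 : (algebraMap K E) d ≠ 0 := by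
          rw [Ne, map_eq_zero_iff _ (algebraMap K E).injective]
          exact hd.1
        have hd1 : ((algebraMap K E) d) ^ (q ^ m - 1) = 1 := by
          rw [← map_pow]
          have : d ^ (q ^ m - 1) = 1 := by
            rw [← hK]; exact FiniteField.pow_card_sub_one_eq_one d hd.1
          rw [this, map_one]
        have hfib := aux_pow_fiber E (q ^ m) hQ1 hEQ γ hγ hγ0 (algebraMap K E d) hd0 hd1
        rw [← hfib]
        congr 1
        ext x
        simp only [hZ', mem_filter, mem_univ, true_and]
        constructor
        · rintro ⟨⟨hx0, hxΦ⟩, hxn⟩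
          rw [← hxn, hnorm]
        · intro hx
          have hxn : Algebra.norm K x = d := by
            apply (algebraMap K E).injective
            rw [hnorm, hx]
          have hx0 : x ≠ 0 := by
            intro h
            rw [h, zero_pow (by positivity)] at hx
            exact hd0 hx.symm
          exact ⟨⟨hx0, by rw [hΦ, hxn]; exact hd.2⟩, hxn⟩
      rw [Finset.sum_congr rfl hper, Finset.sum_const, smul_eq_mul]
    -- counting core : for any totally singular subspace W
    have hcore : ∀ (W : Submodule F E), (∀ x ∈ W, Φ x = 0) →
        ∃ S₁ SP : ℕ, 1 ≤ S₁ ∧ S₁ ≤ SP ∧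
          SP * q ^ (Module.finrank F W) = q ^ (2 * m - Module.finrank F W) ∧
          ((univ.filter fun x : E => Φ x = 0).card * q + SP * q ^ (Module.finrank F W)
            = S₁ * (q ^ (Module.finrank F W) * q)
              + q ^ (2 * m - Module.finrank F W) * q ^ (Module.finrank F W)) ∧
          ((∀ x : E, (∀ w ∈ W, QuadraticMap.polar (⇑Φ) x w = 0) → Φ x = 0 → x ∈ W)
            → S₁ ≤ 1) := by
      intro W hWsing
      set P := LinearMap.ker (Bbil.compl₂ W.subtype) with hPdef
      have hPmem : ∀ x : E, x ∈ P ↔ ∀ w ∈ W, QuadraticMap.polar (⇑Φ) x w = 0 := by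
        intro x
        rw [hPdef, LinearMap.mem_ker]
        constructor
        · intro h w hw
          rw [hpolar]
          have := congrArg (fun g => g (⟨w, hw⟩ : W)) h
          simpa using this
        · intro h
          ext w
          simp only [LinearMap.compl₂_apply, LinearMap.zero_apply, Submodule.coe_subtype]
          rw [← hpolar]
          exact h w w.2
      have hfrP : Module.finrank F P + Module.finrank F W = 2 * m := by
        rw [← hfr2m]
        exact aux_perp F E Bbil hBnd W
      have hdle : Module.finrank F W ≤ 2 * m := by omega
      have hcardW : Fintype.card W = q ^ (Module.finrank F W) := by
        rw [Module.card_eq_pow_finrank (K := F) (V := W), hF]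
      have hcardP : Fintype.card P = q ^ (2 * m - Module.finrank F W) := by
        rw [Module.card_eq_pow_finrank (K := F) (V := P), hF]
        congr 1
        omega
      have hcardQuot : Fintype.card (E ⧸ W) = q ^ (2 * m - Module.finrank F W) := by
        rw [Module.card_eq_pow_finrank (K := F) (V := E ⧸ W), hF]
        congr 1
        have := Submodule.finrank_quotient_add_finrank W
        rw [hfr2m] at this
        omega
      obtain ⟨S₁, SP, h1, h2, h3, h4, h5⟩ := aux_count F E Φ W P hWsing hPmem
      rw [hcardW, hcardP] at h3
      rw [hF, hcardW, hcardQuot] at h4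
      refine ⟨S₁, SP, h1, h2, h3, h4, ?_⟩
      intro h
      apply h5
      intro x hxP hxΦ
      exact h x ((hPmem x).mp hxP) hxΦ
    -- no totally singular subspace of dimension m
    have hnom : ∀ (W : Submodule F E), (∀ x ∈ W, Φ x = 0) →
        Module.finrank F W ≠ m := by
      intro W hWsing hd
      obtain ⟨S₁, SP, h1, h2, h3, h4, _⟩ := hcore W hWsing
      rw [hd] at h3 h4
      have h2m : 2 * m - m = m := by omega
      rw [h2m] at h3 h4
      have hpos : 0 < q ^ m := by positivity
      have hSP : SP = 1 := by
        have : SP * q ^ m = 1 * q ^ m := by rw [one_mul]; exact h3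
        exact Nat.eq_of_mul_eq_mul_right hpos this
      have hS1 : S₁ = 1 := le_antisymm (hSP ▸ h2) h1
      rw [hSP, hS1, one_mul, one_mul] at h4
      set t := Tfin.card with ht
      have hTq' : t * q + q = q ^ m := by
        have : (t + 1) * q = t * q + q := by ring
        rw [← this]; exact hTq
      have hZq : (univ.filter fun x : E => Φ x = 0).card * q
          = q ^ m * (t * q) + (t * q) + q := by
        rw [hZcard]; ring
      have hQQ : q ^ m * q ^ m = q ^ m * (t * q) + q ^ m * q := by
        rw [← hTq']; ring
      have hlt : q ^ m < q ^ m * q := by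
        exact (Nat.lt_mul_iff_one_lt_right hpos).mpr hq1
      omega
    -- extension step
    have hext : ∀ (W : Submodule F E), (∀ x ∈ W, Φ x = 0) →
        Module.finrank F W + 2 ≤ m →
        ∃ W' : Submodule F E, (∀ x ∈ W', Φ x = 0)
          ∧ Module.finrank F W' = Module.finrank F W + 1 := by
      intro W hWsing hdm
      set d := Module.finrank F W with hddef
      obtain ⟨S₁, SP, h1, h2, h3, h4, h5⟩ := hcore W hWsing
      rw [← hddef] at h3 h4
      -- there is a singular vector in P ∖ W
      have hx₀ : ∃ x : E, (∀ w ∈ W, QuadraticMap.polar (⇑Φ) x w = 0) ∧ Φ x = 0 ∧ x ∉ W := by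
        by_contra hcon
        push_neg at hcon
        have hS1 : S₁ = 1 := le_antisymm (h5 (fun x hp hq' => hcon x hp hq')) h1
        rw [hS1, one_mul] at h4
        set t := Tfin.card with ht
        have hTq' : t * q + q = q ^ m := by
          have : (t + 1) * q = t * q + q := by ring
          rw [← this]; exact hTq
        have hZq : (univ.filter fun x : E => Φ x = 0).card * q
            = q ^ m * (t * q) + (t * q) + q := by
          rw [hZcard]; ring
        have hd2m : d ≤ 2 * m := by omega
        have hpows : q ^ (2 * m - d) * q ^ d = q ^ m * q ^ m := by
          rw [← pow_add, ← pow_add]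
          congr 1
          omega
        have hQQ : q ^ m * q ^ m = q ^ m * (t * q) + q ^ m * q := by
          rw [← hTq']; ring
        have hdq : q ^ d * q = q ^ (d + 1) := (pow_succ q d).symm
        have hmq : q ^ m * q = q ^ (m + 1) := (pow_succ q m).symm
        have i1 : q ^ (d + 1) ≤ q ^ (m - 1) := Nat.pow_le_pow_right (by omega) (by omega)
        have i2 : q ^ (m + 1) + q ^ (m + 1) ≤ q ^ (m + 2) := by
          have hq2 : q ^ (m + 1) * 2 ≤ q ^ (m + 1) * q := Nat.mul_le_mul_left _ (by omega)
          have : q ^ (m + 2) = q ^ (m + 1) * q := by ring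
          omega
        have i3 : q ^ (m + 2) ≤ q ^ (2 * m - d) := Nat.pow_le_pow_right (by omega) (by omega)
        have i4 : q ^ (m - 1) < q ^ (m + 1) := Nat.pow_lt_pow_right hq1 (by omega)
        omega
      obtain ⟨x₀, hx₀P, hx₀Φ, hx₀W⟩ := hx₀
      have hx₀0 : x₀ ≠ 0 := fun h => hx₀W (h ▸ W.zero_mem)
      refine ⟨W ⊔ Submodule.span F {x₀}, ?_, ?_⟩
      · intro x hx
        rw [Submodule.mem_sup] at hx
        obtain ⟨w, hw, z, hz, rfl⟩ := hx
        rw [Submodule.mem_span_singleton] at hz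
        obtain ⟨a, rfl⟩ := hz
        have hp : QuadraticMap.polar (⇑Φ) w (a • x₀) = 0 := by
          rw [QuadraticMap.polar_comm, QuadraticMap.polar_smul_left, hx₀P w hw, smul_zero]
        have hΦs : Φ (a • x₀) = 0 := by
          rw [QuadraticMap.map_smul, hx₀Φ]
          simp
        have : Φ (w + a • x₀) = Φ w + Φ (a • x₀) + QuadraticMap.polar (⇑Φ) w (a • x₀) := by
          simp only [QuadraticMap.polar]
          ring
        rw [this, hWsing w hw, hΦs, hp]
        ring
      · have hinf : W ⊓ Submodule.span F {x₀} = ⊥ := by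
          rw [Submodule.eq_bot_iff]
          intro v hv
          rw [Submodule.mem_inf, Submodule.mem_span_singleton] at hv
          obtain ⟨hvW, a, rfl⟩ := hv
          rcases eq_or_ne a 0 with ha | ha
          · rw [ha, zero_smul]
          · exfalso
            apply hx₀W
            have : x₀ = a⁻¹ • (a • x₀) := by
              rw [smul_smul, inv_mul_cancel₀ ha, one_smul]
            rw [this]
            exact W.smul_mem _ hvW
        have hsum := Submodule.finrank_sup_add_finrank_inf_eq W (Submodule.span F {x₀})
        rw [hinf, finrank_bot, add_zero, finrank_span_singleton hx₀0] at hsum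
        omega
    -- assemble Part 3
    refine ⟨Φ, hΦ, ?_, ?_, ?_⟩
    · -- nondegeneracy
      intro x hx _
      apply hBnd.1 x
      intro y
      rw [← hpolar]
      exact hx y
    · -- upper bound
      intro W hWsing
      by_contra hcon
      have hge : m ≤ Module.finrank F W := by omega
      -- extract a subspace of dimension exactly m
      have hb := Module.finBasis F W
      set f : Fin m → E := fun i => (hb (Fin.castLE hge i) : E) with hf
      have hli : LinearIndependent F f := by
        have h1 : LinearIndependent F (fun i => ((hb i : W) : E)) :=
          hb.linearIndependent.map' W.subtype W.ker_subtype
        exact h1.comp (Fin.castLE hge) (Fin.castLE_injective hge)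
      set W₀ := Submodule.span F (Set.range f) with hW₀
      have hW₀le : W₀ ≤ W := by
        rw [hW₀, Submodule.span_le]
        rintro _ ⟨i, rfl⟩
        exact (hb (Fin.castLE hge i)).2
      have hW₀rank : Module.finrank F W₀ = m := by
        rw [hW₀, finrank_span_eq_card hli]
        simp
      exact hnom W₀ (fun x hx => hWsing x (hW₀le hx)) hW₀rank
    · -- attainment
      have hind : ∀ d : ℕ, d ≤ m - 1 →
          ∃ W : Submodule F E, (∀ x ∈ W, Φ x = 0) ∧ Module.finrank F W = d := by
        intro d
        induction d with
        | zero =>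
          intro _
          refine ⟨⊥, ?_, finrank_bot F E⟩
          intro x hx
          rw [Submodule.mem_bot] at hx
          rw [hx]
          exact QuadraticMap.map_zero Φ
        | succ d ih =>
          intro hd
          obtain ⟨W, hWsing, hWrank⟩ := ih (by omega)
          obtain ⟨W', hW'sing, hW'rank⟩ := hext W hWsing (by omega)
          exact ⟨W', hW'sing, by omega⟩
      exact hind (m - 1) le_rfl
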